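/- Let n ≥ 5, let A = 2^{1/n}·M with M the real n×n matrix with M_{ii} = 1 for 1 ≤ i ≤ n−1, M_{in} = 1/2 for 1 ≤ i ≤ n, and all other entries 0, and let H be a real n×n diagonal matrix with positive diagonal entries a₁,…,aₙ. If the set S(HA) of shortest integer vectors of HA generates a finite-index subgroup of ℤⁿ, then syst(HA) = 2^{1/n}·aₙ. -/

import Mathlib

/-- The Euclidean norm of a vector in `ℝⁿ`. -/
noncomputable def eNorm {n : ℕ} (x : Fin n → ℝ) : ℝ :=
  Real.sqrt (∑ i, (x i) ^ 2)

/-- The Euclidean norm of `A v` for an integer vector `v`. -/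
noncomputable def latNorm {n : ℕ} (A : Matrix (Fin n) (Fin n) ℝ) (v : Fin n → ℤ) : ℝ :=
  eNorm (A.mulVec (fun i => (v i : ℝ)))

/-- The systole of `A`: the infimum (in fact minimum) of `‖A v‖` over nonzero
integer vectors `v ∈ ℤⁿ`. -/
noncomputable def syst {n : ℕ} (A : Matrix (Fin n) (Fin n) ℝ) : ℝ :=
  sInf {r | ∃ v : Fin n → ℤ, v ≠ 0 ∧ r = latNorm A v}

/-- The matrix `M` with `M i i = 1` for `i` in the upper-left `(n-1) × (n-1)` block,
last column constantly `1/2`, and all other entries `0`. -/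
noncomputable def Mmat (n : ℕ) : Matrix (Fin n) (Fin n) ℝ :=
  Matrix.of fun i j => if (j : ℕ) = n - 1 then 1 / 2 else if i = j then 1 else 0

/-- The matrix `A = 2^(1/n) • M` (which has determinant `1`). -/
noncomputable def Amat (n : ℕ) : Matrix (Fin n) (Fin n) ℝ :=
  ((2 : ℝ) ^ ((1 : ℝ) / n)) • Mmat n

lemma mulVec_eq {n : ℕ} (hn : 1 ≤ n) (a : Fin n → ℝ) (x : Fin n → ℝ) (i : Fin n) :
    (Matrix.diagonal a * Amat n).mulVec x i =
      a i * ((2:ℝ) ^ ((1:ℝ)/n) *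
        ((if (i:ℕ) = n - 1 then 0 else x i) + x ⟨n-1, by omega⟩ / 2)) := by
  set c : ℝ := (2:ℝ) ^ ((1:ℝ)/n) with hc
  set last : Fin n := ⟨n-1, by omega⟩ with hlast
  have hentry : ∀ j, (Matrix.diagonal a * Amat n) i j =
      a i * (c * (if j = last then 1/2 else if i = j then 1 else 0)) := by
    intro j
    rw [Matrix.diagonal_mul]
    congr 1
    simp only [Amat, Matrix.smul_apply, Mmat, Matrix.of_apply, smul_eq_mul]
    congr 1
    simp [Fin.ext_iff, hlast]
  rw [Matrix.mulVec, dotProduct]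
  simp only [hentry]
  have : ∀ j, a i * (c * (if j = last then 1/2 else if i = j then 1 else 0)) * x j
      = a i * c * ((if j = last then x j / 2 else 0) + (if j ≠ last then (if i = j then x j else 0) else 0)) := by
    intro j
    by_cases h : j = last <;> by_cases h2 : i = j <;> simp [h, h2] <;> ring
  simp only [this]
  rw [← Finset.mul_sum, Finset.sum_add_distrib]
  rw [Finset.sum_ite_eq' Finset.univ last (fun j => x j / 2)]
  simp only [Finset.mem_univ, if_true]
  have h2 : (∑ j, if j ≠ last then (if i = j then x j else 0) else 0)
      = if i ≠ last then x i else 0 := by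
    by_cases h : i = last
    · subst h
      simp only [ne_eq, not_true, if_false]
      apply Finset.sum_eq_zero
      intro j _
      by_cases hj : j = last
      · simp [hj]
      · simp [hj, Ne.symm hj]
    · rw [Finset.sum_eq_single i]
      · simp [h]
      · intro j _ hj
        by_cases hjl : j = last <;> simp [hjl, Ne.symm hj]
      · simp
  rw [h2]
  have : (if i ≠ last then x i else 0) = (if (i:ℕ) = n - 1 then 0 else x i) := by
    by_cases h : i = last <;> simp [h, hlast, Fin.ext_iff] <;> simp [Fin.ext_iff, hlast] at h <;> simp [h]
  rw [this]; ring

/-- For `n ≥ 5`, `A = 2^(1/n) • M` and `H` diagonal with positive entries: if the set of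
shortest integer vectors of `H A` generates a finite-index subgroup of `ℤⁿ`, then
`syst (H A) = 2^(1/n) · aₙ`. -/
theorem syst_eq_of_wellRounded {n : ℕ} (hn : 5 ≤ n) (a : Fin n → ℝ) (ha : ∀ i, 0 < a i)
    (hfin : (AddSubgroup.closure
        {v : Fin n → ℤ | v ≠ 0 ∧
          latNorm (Matrix.diagonal a * Amat n) v =
            syst (Matrix.diagonal a * Amat n)}).index ≠ 0) :
    syst (Matrix.diagonal a * Amat n) =
      (2 : ℝ) ^ ((1 : ℝ) / n) * a ⟨n - 1, by omega⟩ := by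
  have hn1 : 1 ≤ n := by omega
  show syst (Matrix.diagonal a * Amat n) = (2:ℝ)^((1:ℝ)/n) * a ⟨n-1, by omega⟩
  set c : ℝ := (2:ℝ) ^ ((1:ℝ)/n) with hc
  have hc0 : 0 < c := Real.rpow_pos_of_pos two_pos _
  set last : Fin n := ⟨n-1, by omega⟩ with hlast
  set B := Matrix.diagonal a * Amat n with hB
  have hilast : ∀ i : Fin n, (i:ℕ) = n - 1 ↔ i = last := by
    intro i; rw [Fin.ext_iff]
  -- squared norm formula
  have hsq : ∀ v : Fin n → ℤ, latNorm B v ^ 2 =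
      ∑ i, (a i * (c * ((if i = last then 0 else ((v i : ℝ))) + ((v last : ℝ))/2)))^2 := by
    intro v
    rw [latNorm, eNorm, Real.sq_sqrt (by positivity)]
    refine Finset.sum_congr rfl fun i _ => ?_
    rw [hB, mulVec_eq hn1]
    congr 2
    simp only [hilast]
    rfl
  have hnn : ∀ v : Fin n → ℤ, 0 ≤ latNorm B v := fun v => Real.sqrt_nonneg _
  -- systole basic facts
  have hbdd : BddBelow {r | ∃ v : Fin n → ℤ, v ≠ 0 ∧ r = latNorm B v} := by
    refine ⟨0, ?_⟩
    rintro r ⟨v, -, rfl⟩; exact hnn v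
  have hle : ∀ v : Fin n → ℤ, v ≠ 0 → syst B ≤ latNorm B v := by
    intro v hv
    exact csInf_le hbdd ⟨v, hv, rfl⟩
  have hs0 : 0 ≤ syst B := by
    apply Real.sInf_nonneg
    rintro r ⟨v, -, rfl⟩; exact hnn v
  -- upper bounds
  have hub : ∀ j : Fin n, j ≠ last → syst B ≤ c * a j := by
    intro j hj
    have hv : (Pi.single j 1 : Fin n → ℤ) ≠ 0 := by
      intro h
      have := congrFun h j
      simp [Pi.single_eq_same] at this
    refine (hle _ hv).trans ?_
    have h1 : latNorm B (Pi.single j 1) ^ 2 = (c * a j)^2 := by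
      rw [hsq]
      rw [Finset.sum_eq_single j]
      · simp [Pi.single_eq_same, Pi.single_eq_of_ne hj, hj]
        ring
      · intro i _ hij
        simp [Pi.single_eq_of_ne hij, Pi.single_eq_of_ne (Ne.symm hj), ite_self]
      · simp
    nlinarith [hnn (Pi.single j 1), mul_pos hc0 (ha j)]
  have hubl : syst B ≤ c * a last := by
    set w : Fin n → ℤ := fun i => if i = last then 2 else -1 with hw
    have hv : w ≠ 0 := by
      intro h
      have := congrFun h last
      simp [hw] at this
    refine (hle _ hv).trans ?_
    have h1 : latNorm B w ^ 2 = (c * a last)^2 := by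
      rw [hsq]
      rw [Finset.sum_eq_single last]
      · simp [hw]; ring
      · intro i _ hij
        simp [hw, hij]
      · simp
    nlinarith [hnn w, mul_pos hc0 (ha last)]
  -- existence of a shortest vector with nonzero last coordinate
  obtain ⟨v, hvS, hvl⟩ : ∃ v : Fin n → ℤ,
      (v ≠ 0 ∧ latNorm B v = syst B) ∧ v last ≠ 0 := by
    by_contra hcon
    push_neg at hcon
    set S := {v : Fin n → ℤ | v ≠ 0 ∧ latNorm B v = syst B} with hS
    have hsub : AddSubgroup.closure S ≤ (Pi.evalAddMonoidHom (fun _ => ℤ) last).ker := by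
      rw [AddSubgroup.closure_le]
      intro v hv
      exact hcon v hv
    obtain ⟨k, hk0, -, hkmem⟩ :=
      AddSubgroup.exists_nsmul_mem_of_index_ne_zero hfin (Pi.single last 1)
    have := hsub hkmem
    simp [AddMonoidHom.mem_ker, Pi.evalAddMonoidHom, Pi.single_eq_same] at this
    omega
  obtain ⟨hvne, hveq⟩ := hvS
  rcases Int.even_or_odd (v last) with heven | hodd
  · -- even case : syst = c * a last
    obtain ⟨k, hk⟩ := heven
    have hk0 : k ≠ 0 := by omega
    have hterm : (c * a last)^2 ≤ latNorm B v ^ 2 := by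
      rw [hsq]
      have h1 : (a last * (c * ((if last = last then 0 else ((v last : ℝ))) + ((v last : ℝ))/2)))^2
          = (c * a last * (k:ℝ))^2 := by
        rw [if_pos rfl, zero_add]
        have : ((v last : ℝ)) = 2 * (k : ℝ) := by
          rw [show v last = 2 * k by omega]; push_cast; ring
        rw [this]; ring
      calc (c * a last)^2 ≤ (c * a last * (k:ℝ))^2 := by
            have h2 : (1:ℝ) ≤ |(k:ℝ)| := by
              rw [← Int.cast_abs]
              exact_mod_cast Int.one_le_abs hk0
            have h3 : (1:ℝ) ≤ (k:ℝ)^2 := by nlinarith [sq_abs ((k:ℝ))]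
            nlinarith [sq_nonneg (c * a last)]
        _ ≤ ∑ i, (a i * (c * ((if i = last then 0 else ((v i : ℝ))) + ((v last : ℝ))/2)))^2 := by
            rw [← h1]
            exact Finset.single_le_sum (f := fun i => (a i * (c * ((if i = last then 0 else ((v i : ℝ))) + ((v last : ℝ))/2)))^2)
              (fun i _ => sq_nonneg _) (Finset.mem_univ last)
    rw [hveq] at hterm
    have : c * a last ≤ syst B := by
      nlinarith [mul_pos hc0 (ha last)]
    linarith [hubl]
  · -- odd case : contradiction with n ≥ 5
    exfalso
    have hterm : ∀ i : Fin n, (a i * (c/2))^2 ≤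
        (a i * (c * ((if i = last then 0 else ((v i : ℝ))) + ((v last : ℝ))/2)))^2 := by
      intro i
      by_cases hil : i = last
      · rw [hil, if_pos rfl, zero_add]
        have h2 : (1:ℝ) ≤ |((v last : ℝ))| := by
          rw [← Int.cast_abs]
          exact_mod_cast Int.one_le_abs hvl
        have h3 : (1:ℝ) ≤ ((v last : ℝ))^2 := by nlinarith [sq_abs ((v last : ℝ))]
        nlinarith [sq_nonneg (a last * c), sq_nonneg ((v last:ℝ))]
      · simp only [if_neg hil]
        have hodd2 : Odd (2 * v i + v last) := by
          rcases hodd with ⟨m, hm⟩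
          exact ⟨v i + m, by omega⟩
        have hne : 2 * v i + v last ≠ 0 := by
          intro h; rw [h] at hodd2; exact (Int.not_odd_iff_even.mpr Even.zero) hodd2
        have h2 : (1:ℝ) ≤ |((2 * v i + v last : ℤ) : ℝ)| := by
          rw [← Int.cast_abs]
          exact_mod_cast Int.one_le_abs hne
        have h3 : (1:ℝ) ≤ ((2 * v i + v last : ℤ) : ℝ)^2 := by nlinarith [sq_abs (((2 * v i + v last : ℤ) : ℝ))]
        have hcast : ((2 * v i + v last : ℤ) : ℝ) = 2 * (v i : ℝ) + (v last : ℝ) := by push_cast; ring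
        rw [hcast] at h3
        nlinarith [sq_nonneg (a i * c), sq_nonneg (2*(v i:ℝ) + (v last:ℝ))]
    have hlower : ∑ i, (a i * (c/2))^2 ≤ syst B ^ 2 := by
      rw [← hveq, hsq]
      exact Finset.sum_le_sum fun i _ => hterm i
    -- sum over j ≠ last of upper bounds
    have hcard : (Finset.univ.erase last).card = n - 1 := by
      rw [Finset.card_erase_of_mem (Finset.mem_univ _), Finset.card_univ, Fintype.card_fin]
    have hsum_ub : ((n-1 : ℕ) : ℝ) * syst B ^ 2 ≤ ∑ j ∈ Finset.univ.erase last, (c * a j)^2 := by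
      have := Finset.card_nsmul_le_sum (Finset.univ.erase last)
        (fun j => (c * a j)^2) (syst B ^ 2) ?_
      · rw [hcard] at this
        simpa [nsmul_eq_mul] using this
      · intro j hj
        have hjne : j ≠ last := (Finset.mem_erase.mp hj).1
        have := hub j hjne
        show syst B ^ 2 ≤ (c * a j)^2
        nlinarith [hs0, mul_pos hc0 (ha j)]
    have hsplit : ∑ i, (a i * (c/2))^2
        = (∑ j ∈ Finset.univ.erase last, (a j * (c/2))^2) + (a last * (c/2))^2 := by
      rw [Finset.sum_erase_add _ _ (Finset.mem_univ last)]
    have hquarter : ∀ j : Fin n, (a j * (c/2))^2 = (c * a j)^2 / 4 := by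
      intro j; ring
    have hE : ∑ j ∈ Finset.univ.erase last, (a j * (c/2))^2
        = (∑ j ∈ Finset.univ.erase last, (c * a j)^2) / 4 := by
      rw [Finset.sum_div]
      exact Finset.sum_congr rfl fun j _ => by rw [hquarter, ]
    have hn4 : (4:ℝ) ≤ ((n-1:ℕ):ℝ) := by
      have : (4:ℕ) ≤ n - 1 := by omega
      exact_mod_cast this
    have hpos : 0 < (a last * (c/2))^2 := pow_pos (mul_pos (ha last) (half_pos hc0)) 2
    nlinarith [hlower, hsum_ub, hsplit, hE, hpos, sq_nonneg (syst B),
      mul_le_mul_of_nonneg_right hn4 (sq_nonneg (syst B))]
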